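/- Let g(x) = x·m(x)·m̃(x) where m̃(x) = c·m(x) − (1−c)/x, m being the Stieltjes transform of a probability measure μ with support in [0,b], and suppose g can be written g(x) = −∫ m(x)/(1 + c m(x) t) dν(t) with 1 + c m(x) t > 0 on supp(ν) for x > b and m negative increasing to 0 on (b,∞). Then g is positive and strictly decreasing on (b, ∞) and g(x) → 0 as x → ∞. -/

import Mathlib

open MeasureTheory Set Filter

/-- Let g(x) = x m(x) m̃(x) with m̃(x) = c m(x) − (1−c)/x, where m is
the Stieltjes transform of μ supported in [0,b], negative and strictly increasing
to 0 on (b,∞), and suppose g(x) = −∫ m(x)/(1 + c m(x) t) dν(t) with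
1 + c m(x) t > 0 on supp(ν). Then g is positive and strictly decreasing on (b,∞)
and g(x) → 0 as x → ∞. -/
theorem stmt11
    (μ ν : Measure ℝ) [IsProbabilityMeasure μ] [IsProbabilityMeasure ν]
    (b bν c : ℝ) (hb : 0 < b) (hbν : 0 < bν) (hc : 0 < c)
    (hsuppμ : μ (Icc 0 b)ᶜ = 0) (hsuppν : ν (Icc 0 bν)ᶜ = 0) (hν0 : ν {0} = 0)
    (m mt g : ℝ → ℝ)
    (hst : ∀ x ∈ Ioi b, m x = ∫ t, 1 / (t - x) ∂μ)
    (hneg : ∀ x ∈ Ioi b, m x < 0)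
    (hmono : StrictMonoOn m (Ioi b))
    (hm0 : Tendsto m atTop (nhds 0))
    (hmt : ∀ x ∈ Ioi b, mt x = c * m x - (1 - c) / x)
    (hg : ∀ x ∈ Ioi b, g x = x * m x * mt x)
    (hpos : ∀ x ∈ Ioi b, ∀ t ∈ Icc 0 bν, 0 < 1 + c * m x * t)
    (hrep : ∀ x ∈ Ioi b, g x = -∫ t, m x / (1 + c * m x * t) ∂ν) :
    (∀ x ∈ Ioi b, 0 < g x) ∧
    StrictAntiOn g (Ioi b) ∧
    Tendsto g atTop (nhds 0) := by
  -- almost every point is in the support interval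
  have hmem : ∀ᵐ t ∂ν, t ∈ Icc 0 bν := by
    rw [ae_iff]
    exact hsuppν
  -- integrability of the integrand for each x > b
  have hint : ∀ x ∈ Ioi b, Integrable (fun t => m x / (1 + c * m x * t)) ν := by
    intro x hx
    have hcont : ContinuousOn (fun t => m x / (1 + c * m x * t)) (Icc 0 bν) := by
      apply ContinuousOn.div continuousOn_const (by fun_prop)
      intro t ht
      exact (hpos x hx t ht).ne'
    have hio : IntegrableOn (fun t => m x / (1 + c * m x * t)) (Icc 0 bν) ν :=
      hcont.integrableOn_compact isCompact_Icc
    rwa [IntegrableOn, Measure.restrict_eq_self_of_ae_mem hmem] at hio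
  -- the integral is at most m x (hence negative)
  have hle : ∀ x ∈ Ioi b, (∫ t, m x / (1 + c * m x * t) ∂ν) ≤ m x := by
    intro x hx
    have h1 : ∀ᵐ t ∂ν, m x / (1 + c * m x * t) ≤ m x := by
      filter_upwards [hmem] with t ht
      have hd : 0 < 1 + c * m x * t := hpos x hx t ht
      have hd1 : 1 + c * m x * t ≤ 1 := by
        nlinarith [mul_nonneg (mul_nonneg hc.le ht.1) (neg_nonneg.mpr (hneg x hx).le)]
      rw [div_le_iff₀ hd]
      nlinarith [hneg x hx]
    calc (∫ t, m x / (1 + c * m x * t) ∂ν) ≤ ∫ _, m x ∂ν :=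
          integral_mono_ae (hint x hx) (integrable_const _) h1
      _ = m x := by simp
  have hgpos : ∀ x ∈ Ioi b, 0 < g x := by
    intro x hx
    rw [hrep x hx]
    have : (∫ t, m x / (1 + c * m x * t) ∂ν) < 0 :=
      lt_of_le_of_lt (hle x hx) (hneg x hx)
    linarith
  refine ⟨hgpos, ?_, ?_⟩
  · -- strict antitonicity
    intro x hx y hy hxy
    have hmxy : m x < m y := hmono hx hy hxy
    set fx := fun t => m x / (1 + c * m x * t) with hfx
    set fy := fun t => m y / (1 + c * m y * t) with hfy
    have hlt : ∀ᵐ t ∂ν, 0 < fy t - fx t := by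
      filter_upwards [hmem] with t ht
      have hdx : 0 < 1 + c * m x * t := hpos x hx t ht
      have hdy : 0 < 1 + c * m y * t := hpos y hy t ht
      have : fx t < fy t := by
        rw [hfx, hfy]
        simp only []
        rw [div_lt_div_iff₀ hdx hdy]
        nlinarith
      linarith
    have hintd : Integrable (fun t => fy t - fx t) ν := (hint y hy).sub (hint x hx)
    have hnn : 0 ≤ᵐ[ν] fun t => fy t - fx t := by
      filter_upwards [hlt] with t ht using ht.le
    have hsupp : 0 < ν (Function.support fun t => fy t - fx t) := by
      have h0 : ν (Function.support fun t => fy t - fx t)ᶜ = 0 := by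
        have hae : ∀ᵐ t ∂ν, t ∈ Function.support fun t => fy t - fx t := by
          filter_upwards [hlt] with t ht using ne_of_gt ht
        exact ae_iff.mp hae
      by_contra h
      push_neg at h
      have h1 : ν (Function.support fun t => fy t - fx t) = 0 := le_antisymm h zero_le
      have := measure_union_le (μ := ν) (Function.support fun t => fy t - fx t)
        (Function.support fun t => fy t - fx t)ᶜ
      rw [union_compl_self, h0, h1] at this
      simp at this
    have hpos' : 0 < ∫ t, (fy t - fx t) ∂ν :=
      (integral_pos_iff_support_of_nonneg_ae hnn hintd).mpr hsupp
    rw [integral_sub (hint y hy) (hint x hx)] at hpos'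
    rw [hrep x hx, hrep y hy]
    linarith
  · -- tendsto 0
    have hev : ∀ᶠ x in atTop, 0 ≤ g x ∧ g x ≤ -2 * m x := by
      have h1 : ∀ᶠ x in atTop, x ∈ Ioi b := eventually_gt_atTop b
      have h2 : ∀ᶠ x in atTop, -(1 / (2 * c * bν)) < m x := by
        apply hm0.eventually (eventually_gt_nhds ?_)
        rw [neg_lt_zero]
        positivity
      filter_upwards [h1, h2] with x hx hmx
      refine ⟨(hgpos x hx).le, ?_⟩
      have hub : ∀ᵐ t ∂ν, -(m x / (1 + c * m x * t)) ≤ -2 * m x := by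
        filter_upwards [hmem] with t ht
        have hd : 0 < 1 + c * m x * t := hpos x hx t ht
        have hd2 : 1 / 2 < 1 + c * m x * t := by
          have h3 : c * m x * t ≥ c * m x * bν := by
            nlinarith [mul_nonneg (mul_nonneg hc.le (neg_nonneg.mpr (hneg x hx).le))
              (sub_nonneg.mpr ht.2)]
          have h4 : -(1/2 : ℝ) < c * m x * bν := by
            have hcb : (0:ℝ) < c * bν := by positivity
            have h5 := mul_lt_mul_of_pos_left hmx hcb
            have h6 : c * bν * -(1 / (2 * c * bν)) = -(1/2 : ℝ) := by
              field_simp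
            nlinarith [h5, h6]
          linarith
        rw [neg_div', div_le_iff₀ hd]
        nlinarith [hneg x hx]
      have : g x = ∫ t, -(m x / (1 + c * m x * t)) ∂ν := by
        rw [hrep x hx, ← integral_neg]
      rw [this]
      calc (∫ t, -(m x / (1 + c * m x * t)) ∂ν) ≤ ∫ _, -2 * m x ∂ν :=
            integral_mono_ae ((hint x hx).neg) (integrable_const _) hub
        _ = -2 * m x := by simp
    have hub0 : Tendsto (fun x => -2 * m x) atTop (nhds 0) := by
      have := hm0.const_mul (-2 : ℝ)
      simpa using this
    apply tendsto_of_tendsto_of_tendsto_of_le_of_le' tendsto_const_nhds hub0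
    · filter_upwards [hev] with x hx using hx.1
    · filter_upwards [hev] with x hx using hx.2
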